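/- Two connected components of an ambient wedge intersected with AdS: the set S := {x ∈ AdS : x₁ > |x₀|} is the disjoint union of W_R := {x ∈ AdS : x₁ > |x₀|, x_n > 0} and W̃_R′ := {x ∈ AdS : x₁ > |x₀|, x_n < 0}; in particular no point x ∈ AdS satisfies both x₁ > |x₀| and x_n = 0. Moreover W_R and W̃_R′ are nonempty, open in AdS (subspace topology), and each is connected; consequently S has exactly two connected components, namely W_R and W̃_R′. -/

import Mathlib

open Matrix NormedSpace

/-- The diagonal entries of the metric `g = diag(1, −1, …, −1, 1)` on `ℝ^{n+1}`. -/
def eta (n : ℕ) (i : Fin (n + 1)) : ℝ := if i = 0 ∨ i = Fin.last n then 1 else -1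

/-- The ambient bilinear form `x·y = x₀y₀ − x₁y₁ − ⋯ − x_{n−1}y_{n−1} + x_ny_n`. -/
def mdot (n : ℕ) (x y : Fin (n + 1) → ℝ) : ℝ := ∑ i, eta n i * x i * y i

/-- Anti–de Sitter space: the quadric `{x ∈ ℝ^{n+1} : x·x = 1}`. -/
def AdS (n : ℕ) : Set (Fin (n + 1) → ℝ) := {x | mdot n x x = 1}

/-- The right wedge `W_R = {x ∈ AdS : x₁ > |x₀|, xₙ > 0}`. -/
def WR (n : ℕ) : Set (Fin (n + 1) → ℝ) :=
  {x | x ∈ AdS n ∧ |x 0| < x 1 ∧ 0 < x (Fin.last n)}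

/-- The opposite wedge `W_R′ = {x ∈ AdS : −x₁ > |x₀|, xₙ > 0}`. -/
def WRp (n : ℕ) : Set (Fin (n + 1) → ℝ) :=
  {x | x ∈ AdS n ∧ |x 0| < -x 1 ∧ 0 < x (Fin.last n)}

/-- The conjugate wedge `W̃_R = {x ∈ AdS : −x₁ > |x₀|, xₙ < 0}`. -/
def WtR (n : ℕ) : Set (Fin (n + 1) → ℝ) :=
  {x | x ∈ AdS n ∧ |x 0| < -x 1 ∧ x (Fin.last n) < 0}

/-- The conjugate opposite wedge `W̃_R′ = {x ∈ AdS : x₁ > |x₀|, xₙ < 0}`. -/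
def WtRp (n : ℕ) : Set (Fin (n + 1) → ℝ) :=
  {x | x ∈ AdS n ∧ |x 0| < x 1 ∧ x (Fin.last n) < 0}

/-- The matrix unit `E_{μν}`. -/
noncomputable def E (n : ℕ) (μ ν : Fin (n + 1)) : Matrix (Fin (n + 1)) (Fin (n + 1)) ℝ :=
  Matrix.single μ ν 1

noncomputable section

def sqp (n : ℕ) (x : Fin (n + 1) → ℝ) : ℝ :=
  ∑ i : Fin n, eta n i.castSucc * x i.castSucc * x i.castSucc

lemma eta_last (n : ℕ) : eta n (Fin.last n) = 1 := by simp [eta]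

lemma eta_castSucc (n : ℕ) (i : Fin n) :
    eta n i.castSucc = if i.castSucc = 0 then 1 else -1 := by
  have : i.castSucc ≠ Fin.last n := (Fin.castSucc_lt_last i).ne
  simp [eta, this]

lemma mdot_self (n : ℕ) (x : Fin (n + 1) → ℝ) :
    mdot n x x = sqp n x + x (Fin.last n) * x (Fin.last n) := by
  rw [mdot, Fin.sum_univ_castSucc, eta_last, one_mul, sqp]

lemma sqp_lt' (m : ℕ) (x : Fin (m + 2 + 1) → ℝ) (h : |x 0| < x 1) :
    sqp (m + 2) x < 0 := by
  have h01 : (0 : Fin (m + 2)) ≠ 1 := by simp [Fin.ext_iff]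
  have hc0 : ((0 : Fin (m + 2)).castSucc : Fin (m + 3)) = 0 := by simp
  have hc1 : ((1 : Fin (m + 2)).castSucc : Fin (m + 3)) = 1 := by
    simp [Fin.ext_iff]
  have he0 : eta (m + 2) (0 : Fin (m + 3)) = 1 := by simp [eta]
  have he1 : eta (m + 2) (1 : Fin (m + 3)) = -1 := by
    have h10 : (1 : Fin (m + 3)) ≠ 0 := by simp [Fin.ext_iff]
    have h1l : (1 : Fin (m + 3)) ≠ Fin.last (m + 2) := by
      simp only [ne_eq, Fin.ext_iff, Fin.val_one, Fin.val_last]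
      omega
    simp [eta, h10, h1l]
  have hsub : sqp (m + 2) x ≤ ∑ i ∈ ({0, 1} : Finset (Fin (m + 2))),
      eta (m + 2) i.castSucc * x i.castSucc * x i.castSucc := by
    rw [sqp, ← Finset.sum_sdiff (Finset.subset_univ ({0, 1} : Finset (Fin (m + 2))))]
    have hrest : ∑ i ∈ (Finset.univ \ {0, 1} : Finset (Fin (m + 2))),
        eta (m + 2) i.castSucc * x i.castSucc * x i.castSucc ≤ 0 := by
      apply Finset.sum_nonpos
      intro i hi
      simp only [Finset.mem_sdiff, Finset.mem_insert, Finset.mem_singleton] at hi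
      have hi0 : i ≠ 0 := fun hh => hi.2 (Or.inl hh)
      have hne : i.castSucc ≠ 0 := by
        exact Fin.castSucc_ne_zero_iff.mpr hi0
      rw [eta_castSucc, if_neg hne]
      nlinarith [mul_self_nonneg (x i.castSucc)]
    linarith
  have hsum : ∑ i ∈ ({0, 1} : Finset (Fin (m + 2))),
      eta (m + 2) i.castSucc * x i.castSucc * x i.castSucc = x 0 * x 0 - x 1 * x 1 := by
    rw [Finset.sum_pair h01, hc0, hc1, he0, he1]
    ring
  have hq : x 0 * x 0 < x 1 * x 1 := by
    nlinarith [abs_mul_abs_self (x 0), abs_nonneg (x 0)]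
  linarith

lemma sqp_lt (n : ℕ) (hn : 2 ≤ n) (x : Fin (n + 1) → ℝ) (h : |x 0| < x 1) :
    sqp n x < 0 := by
  obtain ⟨m, rfl⟩ : ∃ m, n = m + 2 := ⟨n - 2, by omega⟩
  exact sqp_lt' m x h

def lift (n : ℕ) (σ : ℝ) (x : Fin (n + 1) → ℝ) : Fin (n + 1) → ℝ :=
  fun i => if i = Fin.last n then σ * Real.sqrt (1 - sqp n x) else x i

lemma lift_apply_ne (n : ℕ) (σ : ℝ) (x : Fin (n + 1) → ℝ) {i : Fin (n + 1)}
    (hi : i ≠ Fin.last n) : lift n σ x i = x i := by simp [lift, hi]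

lemma lift_apply_last (n : ℕ) (σ : ℝ) (x : Fin (n + 1) → ℝ) :
    lift n σ x (Fin.last n) = σ * Real.sqrt (1 - sqp n x) := by simp [lift]

lemma sqp_lift (n : ℕ) (σ : ℝ) (x : Fin (n + 1) → ℝ) : sqp n (lift n σ x) = sqp n x := by
  apply Finset.sum_congr rfl
  intro i _
  rw [lift_apply_ne n σ x (Fin.castSucc_lt_last i).ne]

lemma continuous_sqp (n : ℕ) : Continuous (sqp n) := by
  apply continuous_finset_sum
  intro i _
  exact ((continuous_const.mul (continuous_apply _)).mul (continuous_apply _))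

lemma continuous_lift (n : ℕ) (σ : ℝ) : Continuous (lift n σ) := by
  apply continuous_pi
  intro i
  by_cases hi : i = Fin.last n
  · subst hi; simp only [lift_apply_last]
    exact (continuous_const.mul ((continuous_const.sub (continuous_sqp n)).sqrt))
  · simpa [lift, hi] using continuous_apply i

lemma zero_ne_last (n : ℕ) (hn : 2 ≤ n) : (0 : Fin (n + 1)) ≠ Fin.last n := by
  simp only [ne_eq, Fin.ext_iff, Fin.val_zero, Fin.val_last]
  omega

lemma one_ne_last (n : ℕ) (hn : 2 ≤ n) : (1 : Fin (n + 1)) ≠ Fin.last n := by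
  obtain ⟨m, rfl⟩ : ∃ m, n = m + 2 := ⟨n - 2, by omega⟩
  simp only [ne_eq, Fin.ext_iff, Fin.val_one, Fin.val_last]
  omega

lemma lift_image (n : ℕ) (hn : 2 ≤ n) (σ : ℝ) (hσ : σ = 1 ∨ σ = -1) :
    lift n σ '' {x | |x 0| < x 1} =
      {y | y ∈ AdS n ∧ |y 0| < y 1 ∧ 0 < σ * y (Fin.last n)} := by
  have hσsq : σ * σ = 1 := by rcases hσ with rfl | rfl <;> norm_num
  ext y
  constructor
  · rintro ⟨x, hx, rfl⟩
    have hx' : |x 0| < x 1 := hx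
    have hs : sqp n x < 0 := sqp_lt n hn x hx'
    have h1s : (0:ℝ) < 1 - sqp n x := by linarith
    have h0 : lift n σ x 0 = x 0 := lift_apply_ne n σ x (zero_ne_last n hn)
    have h1 : lift n σ x 1 = x 1 := lift_apply_ne n σ x (one_ne_last n hn)
    refine ⟨?_, by rw [h0, h1]; exact hx', ?_⟩
    · show mdot n _ _ = 1
      rw [mdot_self, sqp_lift, lift_apply_last]
      have : σ * Real.sqrt (1 - sqp n x) * (σ * Real.sqrt (1 - sqp n x))
          = Real.sqrt (1 - sqp n x) * Real.sqrt (1 - sqp n x) := by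
        rw [show σ * Real.sqrt (1 - sqp n x) * (σ * Real.sqrt (1 - sqp n x))
            = (σ * σ) * (Real.sqrt (1 - sqp n x) * Real.sqrt (1 - sqp n x)) by ring, hσsq,
          one_mul]
      rw [this, Real.mul_self_sqrt h1s.le]
      ring
    · rw [lift_apply_last, show σ * (σ * Real.sqrt (1 - sqp n x))
        = (σ * σ) * Real.sqrt (1 - sqp n x) by ring, hσsq, one_mul]
      exact Real.sqrt_pos.mpr h1s
  · rintro ⟨hy, hy1, hylast⟩
    refine ⟨y, hy1, ?_⟩
    have hs : sqp n y < 0 := sqp_lt n hn y hy1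
    have hml : y (Fin.last n) * y (Fin.last n) = 1 - sqp n y := by
      have := hy
      rw [AdS, Set.mem_setOf_eq, mdot_self] at this
      linarith
    have hsqrt : Real.sqrt (1 - sqp n y) = |y (Fin.last n)| := by
      rw [← hml, ← sq, Real.sqrt_sq_eq_abs]
    funext i
    by_cases hi : i = Fin.last n
    · subst hi
      rw [lift_apply_last, hsqrt]
      rcases hσ with rfl | rfl
      · rw [one_mul] at hylast ⊢
        exact abs_of_pos hylast
      · have : y (Fin.last n) < 0 := by linarith [neg_pos.mp (by linarith : 0 < -y (Fin.last n))]
        rw [abs_of_neg this]; ring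
    · exact lift_apply_ne n σ y hi

lemma convexC (n : ℕ) : Convex ℝ {x : Fin (n + 1) → ℝ | |x 0| < x 1} := by
  intro x hx y hy a b ha hb hab
  simp only [Set.mem_setOf_eq, Pi.add_apply, Pi.smul_apply, smul_eq_mul] at *
  have h1 : |a * x 0 + b * y 0| ≤ a * |x 0| + b * |y 0| := by
    calc |a * x 0 + b * y 0| ≤ |a * x 0| + |b * y 0| := abs_add_le _ _
    _ = a * |x 0| + b * |y 0| := by rw [abs_mul, abs_mul, abs_of_nonneg ha, abs_of_nonneg hb]
  have hmin : 0 < min (x 1 - |x 0|) (y 1 - |y 0|) := lt_min (by linarith) (by linarith)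
  have h2 : a * min (x 1 - |x 0|) (y 1 - |y 0|) ≤ a * (x 1 - |x 0|) :=
    mul_le_mul_of_nonneg_left (min_le_left _ _) ha
  have h3 : b * min (x 1 - |x 0|) (y 1 - |y 0|) ≤ b * (y 1 - |y 0|) :=
    mul_le_mul_of_nonneg_left (min_le_right _ _) hb
  nlinarith

lemma nonemptyC (n : ℕ) (hn : 2 ≤ n) :
    Set.Nonempty {x : Fin (n + 1) → ℝ | |x 0| < x 1} := by
  refine ⟨fun i => if i = 1 then 1 else 0, ?_⟩
  have h01 : (0 : Fin (n + 1)) ≠ 1 := by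
    obtain ⟨m, rfl⟩ : ∃ m, n = m + 2 := ⟨n - 2, by omega⟩
    simp [Fin.ext_iff]
  simp [Set.mem_setOf_eq, h01]

/-- Two connected components of an ambient wedge intersected with AdS: the set
`S = {x ∈ AdS : x₁ > |x₀|}` is the disjoint union of `W_R` and `W̃_R′` (in particular no
`x ∈ AdS` has `x₁ > |x₀|` and `xₙ = 0`); both wedges are nonempty, open in AdS and
connected, and the connected components of `S` are exactly `W_R` and `W̃_R′`. -/
theorem ambient_wedge_two_components (n : ℕ) (hn : 2 ≤ n) :
    {x | x ∈ AdS n ∧ |x 0| < x 1} = WR n ∪ WtRp n ∧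
    Disjoint (WR n) (WtRp n) ∧
    (∀ x ∈ AdS n, |x 0| < x 1 → x (Fin.last n) ≠ 0) ∧
    (WR n).Nonempty ∧ (WtRp n).Nonempty ∧
    IsOpen (Subtype.val ⁻¹' WR n : Set (AdS n)) ∧
    IsOpen (Subtype.val ⁻¹' WtRp n : Set (AdS n)) ∧
    IsConnected (WR n) ∧ IsConnected (WtRp n) ∧
    (∀ x ∈ {x | x ∈ AdS n ∧ |x 0| < x 1},
      connectedComponentIn {x | x ∈ AdS n ∧ |x 0| < x 1} x = WR n ∨
      connectedComponentIn {x | x ∈ AdS n ∧ |x 0| < x 1} x = WtRp n) := by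
  -- key fact: on the wedge the last coordinate is nonzero
  have hlast : ∀ x ∈ AdS n, |x 0| < x 1 → x (Fin.last n) ≠ 0 := by
    intro x hx hx1 h0
    have hs : sqp n x < 0 := sqp_lt n hn x hx1
    have : mdot n x x = 1 := hx
    rw [mdot_self, h0] at this
    linarith
  -- descriptions of the wedges as images
  have hWR : WR n = lift n 1 '' {x | |x 0| < x 1} := by
    rw [lift_image n hn 1 (Or.inl rfl)]
    ext y
    simp only [WR, Set.mem_setOf_eq, one_mul]
  have hWt : WtRp n = lift n (-1) '' {x | |x 0| < x 1} := by
    rw [lift_image n hn (-1) (Or.inr rfl)]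
    ext y
    simp only [WtRp, Set.mem_setOf_eq]
    constructor
    · rintro ⟨h1, h2, h3⟩; exact ⟨h1, h2, by linarith⟩
    · rintro ⟨h1, h2, h3⟩; exact ⟨h1, h2, by linarith⟩
  have hCconn : IsConnected {x : Fin (n + 1) → ℝ | |x 0| < x 1} :=
    (convexC n).isConnected (nonemptyC n hn)
  have hWRconn : IsConnected (WR n) := by
    rw [hWR]; exact hCconn.image _ (continuous_lift n 1).continuousOn
  have hWtconn : IsConnected (WtRp n) := by
    rw [hWt]; exact hCconn.image _ (continuous_lift n (-1)).continuousOn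
  have hWRne : (WR n).Nonempty := hWRconn.nonempty
  have hWtne : (WtRp n).Nonempty := hWtconn.nonempty
  -- union
  have hunion : {x | x ∈ AdS n ∧ |x 0| < x 1} = WR n ∪ WtRp n := by
    ext x
    simp only [Set.mem_setOf_eq, Set.mem_union, WR, WtRp]
    constructor
    · rintro ⟨h1, h2⟩
      rcases (hlast x h1 h2).lt_or_gt with h | h
      · exact Or.inr ⟨h1, h2, h⟩
      · exact Or.inl ⟨h1, h2, h⟩
    · rintro (⟨h1, h2, _⟩ | ⟨h1, h2, _⟩) <;> exact ⟨h1, h2⟩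
  -- disjoint
  have hdisj : Disjoint (WR n) (WtRp n) := by
    rw [Set.disjoint_left]
    rintro x ⟨_, _, h1⟩ ⟨_, _, h2⟩
    linarith
  -- openness
  have hopen : ∀ s : Set ℝ, IsOpen s →
      IsOpen (Subtype.val ⁻¹' {x | x ∈ AdS n ∧ |x 0| < x 1 ∧ x (Fin.last n) ∈ s}
        : Set (AdS n)) := by
    intro s hs
    have : (Subtype.val ⁻¹' {x | x ∈ AdS n ∧ |x 0| < x 1 ∧ x (Fin.last n) ∈ s} : Set (AdS n))
        = Subtype.val ⁻¹' {x : Fin (n+1) → ℝ | |x 0| < x 1 ∧ x (Fin.last n) ∈ s} := by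
      ext a
      simp only [Set.mem_preimage, Set.mem_setOf_eq]
      exact ⟨fun h => ⟨h.2.1, h.2.2⟩, fun h => ⟨a.2, h.1, h.2⟩⟩
    rw [this]
    apply IsOpen.preimage continuous_subtype_val
    exact IsOpen.inter (isOpen_lt ((continuous_apply 0).abs) (continuous_apply 1))
      (hs.preimage (continuous_apply (Fin.last n)))
  have hopenWR : IsOpen (Subtype.val ⁻¹' WR n : Set (AdS n)) := by
    have := hopen (Set.Ioi 0) isOpen_Ioi
    simpa [WR, Set.mem_Ioi] using this
  have hopenWt : IsOpen (Subtype.val ⁻¹' WtRp n : Set (AdS n)) := by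
    have := hopen (Set.Iio 0) isOpen_Iio
    simpa [WtRp, Set.mem_Iio] using this
  refine ⟨hunion, hdisj, hlast, hWRne, hWtne, hopenWR, hopenWt, hWRconn, hWtconn, ?_⟩
  -- components
  intro x hx
  set S := {x | x ∈ AdS n ∧ |x 0| < x 1} with hS
  set u := {z : Fin (n+1) → ℝ | 0 < z (Fin.last n)} with hu
  set v := {z : Fin (n+1) → ℝ | z (Fin.last n) < 0} with hv
  have huo : IsOpen u := isOpen_lt continuous_const (continuous_apply _)
  have hvo : IsOpen v := isOpen_lt (continuous_apply _) continuous_const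
  have huv : Disjoint u v := by
    rw [Set.disjoint_left]
    intro z h1 h2
    simp only [hu, hv, Set.mem_setOf_eq] at h1 h2
    linarith
  have hSuv : S ⊆ u ∪ v := by
    intro z hz
    rcases (hlast z hz.1 hz.2).lt_or_gt with h | h
    · exact Or.inr h
    · exact Or.inl h
  have hsubS : connectedComponentIn S x ⊆ S := connectedComponentIn_subset S x
  have hxS : x ∈ connectedComponentIn S x := mem_connectedComponentIn hx
  rcases (hlast x hx.1 hx.2).lt_or_gt with hneg | hpos
  · -- x ∈ v, component = WtRp
    right
    apply Set.Subset.antisymm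
    · intro z hz
      have hzv : z ∈ v :=
        isPreconnected_connectedComponentIn.subset_left_of_subset_union hvo huo huv.symm
          (fun w hw => (hSuv (hsubS hw)).symm) ⟨x, hxS, hneg⟩ hz
      exact ⟨(hsubS hz).1, (hsubS hz).2, hzv⟩
    · exact hWtconn.isPreconnected.subset_connectedComponentIn ⟨hx.1, hx.2, hneg⟩
        (fun z hz => ⟨hz.1, hz.2.1⟩)
  · -- x ∈ u, component = WR
    left
    apply Set.Subset.antisymm
    · intro z hz
      have hzu : z ∈ u :=
        isPreconnected_connectedComponentIn.subset_left_of_subset_union huo hvo huv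
          (fun w hw => hSuv (hsubS hw)) ⟨x, hxS, hpos⟩ hz
      exact ⟨(hsubS hz).1, (hsubS hz).2, hzu⟩
    · exact hWRconn.isPreconnected.subset_connectedComponentIn ⟨hx.1, hx.2, hpos⟩
        (fun z hz => ⟨hz.1, hz.2.1⟩)

end
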